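/- arXiv:2502.08003 — 2 statements merged into one kernel-verified Lean document; each statement's English description precedes it below -/
import Mathlib

section
/- Let C ≥ 2 and T ≥ 1 be integers and let 0 < δ ≤ 1. On a probability space (Ω, ℙ), for each time t ∈ {1,…,T} and each unordered pair {i,j} of distinct elements of {1,…,C}, let X_{t,{i,j}} be a {0,1}-valued random variable with ℙ(X_{t,{i,j}} = 1) ≥ 1 − δ(C−1)/(8CT), and suppose the whole family (X_{t,{i,j}})_{t,{i,j}} is independent. For each t and ω ∈ Ω, let G_t(ω) be the simple graph on vertex set {1,…,C} in which distinct vertices i and j are adjacent if and only if X_{t,{i,j}}(ω) = 1. Then ℙ( G_t(ω) is connected for every t ∈ {1,…,T} ) ≥ 1 − Cδ. -/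
open MeasureTheory ProbabilityTheory

/-- The simple graph on `Fin C` determined by a Boolean labelling of the unordered pairs of
distinct vertices: distinct vertices `i` and `j` are adjacent iff the label of `{i,j}` is
`true`. -/
def graphOfEdges {C : ℕ} (f : {e : Sym2 (Fin C) // ¬ e.IsDiag} → Bool) :
    SimpleGraph (Fin C) where
  Adj i j := ∃ h : i ≠ j, f ⟨s(i, j), fun hd => h (Sym2.mk_isDiag_iff.mp hd)⟩ = true
  symm := by
    constructor
    rintro i j ⟨h, hf⟩
    refine ⟨h.symm, ?_⟩
    convert hf using 2
    exact Subtype.ext (Sym2.eq_swap)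
  loopless := by
    constructor
    rintro i ⟨h, -⟩
    exact h rfl

/-- Proposition 13 of the paper: if, for each of `T` time steps, the edges among `C ≥ 2`
vertices are sampled independently (also across time), each edge being present with
probability at least `1 - δ(C-1)/(8CT)`, then with probability at least `1 - Cδ` the
sampled graph is connected at every time step. -/
theorem random_graphs_connected_whp_chebyshev
    {Ω : Type*} [MeasurableSpace Ω] (P : Measure Ω) [IsProbabilityMeasure P]
    (C T : ℕ) (hC : 2 ≤ C) (hT : 1 ≤ T)
    (δ : ℝ) (hδ0 : 0 < δ) (hδ1 : δ ≤ 1)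
    (X : Fin T × {e : Sym2 (Fin C) // ¬ e.IsDiag} → Ω → Bool)
    (hprob : ∀ idx,
      ENNReal.ofReal (1 - δ * ((C : ℝ) - 1) / (8 * (C : ℝ) * (T : ℝ)))
        ≤ P {ω | X idx ω = true})
    (hindep : iIndepFun X P) :
    1 - ENNReal.ofReal ((C : ℝ) * δ) ≤
      P {ω | ∀ t : Fin T, (graphOfEdges (fun e => X (t, e) ω)).Connected} := by
  classical
  have hCz : NeZero C := ⟨by omega⟩
  set q : ℝ := δ * ((C : ℝ) - 1) / (8 * (C : ℝ) * (T : ℝ)) with hqdef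
  have hCR : (2 : ℝ) ≤ (C : ℝ) := by exact_mod_cast hC
  have hTR : (1 : ℝ) ≤ (T : ℝ) := by exact_mod_cast hT
  have hCpos : (0 : ℝ) < C := by linarith
  have hTpos : (0 : ℝ) < T := by linarith
  have hq0 : 0 ≤ q := by
    apply div_nonneg
    · nlinarith
    · positivity
  have hq1 : q ≤ 1 / 8 := by
    rw [hqdef, div_le_iff₀ (by positivity)]
    nlinarith [mul_le_of_le_one_left (by linarith : (0:ℝ) ≤ (C:ℝ) - 1) hδ1]
  -- The "star" index set: all (t, e) with vertex 0 ∈ e.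
  set S : Finset (Fin T × {e : Sym2 (Fin C) // ¬ e.IsDiag}) :=
    Finset.univ.filter (fun idx => (0 : Fin C) ∈ idx.2.1) with hSdef
  -- Cardinality bound: |S| ≤ T * C.
  have hcard : S.card ≤ T * C := by
    have h1 : S.card ≤ (Finset.univ : Finset (Fin T × Fin C)).card := by
      apply Finset.card_le_card_of_injOn
        (fun idx => (idx.1, if h : (0 : Fin C) ∈ idx.2.1 then Sym2.Mem.other' h else 0))
      · intro _ _; exact Finset.mem_univ _
      · intro a ha b hb hab
        have ha0 : (0 : Fin C) ∈ a.2.1 := by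
          simpa [hSdef] using ha
        have hb0 : (0 : Fin C) ∈ b.2.1 := by
          simpa [hSdef] using hb
        simp only [dif_pos ha0, dif_pos hb0, Prod.mk.injEq] at hab
        obtain ⟨h1, h2⟩ := hab
        have hspec_a := Sym2.other_spec' ha0
        have hspec_b := Sym2.other_spec' hb0
        have : a.2.1 = b.2.1 := by rw [← hspec_a, ← hspec_b, h2]
        exact Prod.ext h1 (Subtype.ext this)
    simpa using h1
  -- The star event.
  set A : Set Ω := ⋂ idx ∈ S, {ω | X idx ω = true} with hAdef
  -- Independence gives the product formula.
  have hAP : P A = ∏ idx ∈ S, P {ω | X idx ω = true} := by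
    apply hindep.meas_biInter
    intro i _
    exact ⟨{true}, MeasurableSet.of_discrete, rfl⟩
  -- Each factor is at least ofReal (1 - q).
  have hprod : ENNReal.ofReal (1 - q) ^ S.card ≤ ∏ idx ∈ S, P {ω | X idx ω = true} := by
    rw [← Finset.prod_const]
    exact Finset.prod_le_prod' fun idx _ => hprob idx
  -- The star event implies connectivity at every time.
  have hsub : A ⊆ {ω | ∀ t : Fin T, (graphOfEdges (fun e => X (t, e) ω)).Connected} := by
    intro ω hω t
    have hall : ∀ idx ∈ S, X idx ω = true := by
      intro idx hidx
      exact Set.mem_iInter₂.mp hω idx hidx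
    set G := graphOfEdges (fun e => X (t, e) ω) with hGdef
    have h0 : ∀ v : Fin C, G.Reachable 0 v := by
      intro v
      by_cases hv : v = 0
      · subst hv; exact SimpleGraph.Reachable.refl _
      · have h0v : (0 : Fin C) ≠ v := fun h => hv h.symm
        apply SimpleGraph.Adj.reachable
        refine ⟨h0v, ?_⟩
        apply hall
        rw [hSdef]
        refine Finset.mem_filter.mpr ⟨Finset.mem_univ _, ?_⟩
        exact Sym2.mem_mk_left _ _
    haveI : Nonempty (Fin C) := ⟨0⟩
    exact SimpleGraph.Connected.mk fun v w => (h0 v).symm.trans (h0 w)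
  -- Real inequality: 1 - C δ ≤ (1 - q) ^ |S|.
  have hq2 : (0 : ℝ) ≤ 1 - q := by linarith
  have hkey : 1 - (C : ℝ) * δ ≤ (1 - q) ^ S.card := by
    have h1 : 1 + (S.card : ℝ) * (-q) ≤ (1 + -q) ^ S.card :=
      one_add_mul_le_pow (by linarith) _
    have hcardR : (S.card : ℝ) ≤ (T : ℝ) * (C : ℝ) := by
      exact_mod_cast hcard
    have h2 : (S.card : ℝ) * q ≤ ((T : ℝ) * (C : ℝ)) * q :=
      mul_le_mul_of_nonneg_right hcardR hq0
    have h3 : ((T : ℝ) * (C : ℝ)) * q = δ * ((C : ℝ) - 1) / 8 := by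
      rw [hqdef]; field_simp
    have h4 : δ * ((C : ℝ) - 1) / 8 ≤ (C : ℝ) * δ := by nlinarith
    have : (1 : ℝ) + -q = 1 - q := by ring
    rw [this] at h1
    nlinarith
  -- Conclude in ℝ≥0∞.
  have hstep : 1 - ENNReal.ofReal ((C : ℝ) * δ) ≤ ENNReal.ofReal (1 - (C : ℝ) * δ) := by
    rw [tsub_le_iff_right]
    have h1 : (1 : ENNReal) = ENNReal.ofReal ((1 - (C : ℝ) * δ) + (C : ℝ) * δ) := by norm_num
    rw [h1]
    exact ENNReal.ofReal_add_le
  calc 1 - ENNReal.ofReal ((C : ℝ) * δ)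
      ≤ ENNReal.ofReal (1 - (C : ℝ) * δ) := hstep
    _ ≤ ENNReal.ofReal ((1 - q) ^ S.card) := ENNReal.ofReal_le_ofReal hkey
    _ = ENNReal.ofReal (1 - q) ^ S.card := ENNReal.ofReal_pow hq2 _
    _ ≤ ∏ idx ∈ S, P {ω | X idx ω = true} := hprod
    _ = P A := hAP.symm
    _ ≤ P {ω | ∀ t : Fin T, (graphOfEdges (fun e => X (t, e) ω)).Connected} :=
        measure_mono hsub
end

section
/- Let C, M, l be integers with C ≥ 4, M ≥ C, and 2 ≤ l ≤ C − 1. Then (e/(e−1)) · (C²/M²) · ((C−l−1)!/(C−2)!) < 1, where e is Euler's number and (·)! denotes the factorial. -/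
/-- For integers `C ≥ 4`, `M ≥ C` and `2 ≤ l ≤ C - 1`, one has
`(e/(e-1)) · (C²/M²) · ((C-l-1)!/(C-2)!) < 1`. -/
theorem worst_case_edge_prob_lt_one
    (C M l : ℕ) (hC : 4 ≤ C) (hM : C ≤ M) (hl2 : 2 ≤ l) (hlC : l ≤ C - 1) :
    (Real.exp 1 / (Real.exp 1 - 1)) * ((C : ℝ) ^ 2 / (M : ℝ) ^ 2) *
      ((Nat.factorial (C - l - 1) : ℝ) / (Nat.factorial (C - 2) : ℝ)) < 1 := by
  have he : (2 : ℝ) < Real.exp 1 := by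
    have := Real.exp_one_gt_d9; linarith
  have he1 : (0 : ℝ) < Real.exp 1 - 1 := by linarith
  have hA : Real.exp 1 / (Real.exp 1 - 1) < 2 := by
    rw [div_lt_iff₀ he1]; linarith
  have hA0 : 0 < Real.exp 1 / (Real.exp 1 - 1) := by positivity
  have hMpos : (0 : ℝ) < (M : ℝ) := by
    have : 0 < M := lt_of_lt_of_le (by omega) hM
    exact_mod_cast this
  have hB : (C : ℝ) ^ 2 / (M : ℝ) ^ 2 ≤ 1 := by
    rw [div_le_one (by positivity)]
    have : (C : ℝ) ≤ (M : ℝ) := by exact_mod_cast hM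
    nlinarith [Nat.cast_nonneg (α := ℝ) C]
  have hB0 : 0 < (C : ℝ) ^ 2 / (M : ℝ) ^ 2 := by
    have : (0 : ℝ) < (C : ℝ) := by exact_mod_cast (lt_of_lt_of_le (by omega) hC)
    positivity
  -- factorial bound
  have hfn : Nat.factorial (C - l - 1) * 2 ≤ Nat.factorial (C - 2) := by
    have h1 : Nat.factorial (C - l - 1) ≤ Nat.factorial (C - 3) :=
      Nat.factorial_le (by omega)
    have h2 : Nat.factorial (C - 2) = (C - 2) * Nat.factorial (C - 3) := by
      have : C - 2 = (C - 3) + 1 := by omega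
      rw [this, Nat.factorial_succ]
    have h3 : 2 ≤ C - 2 := by omega
    calc Nat.factorial (C - l - 1) * 2 ≤ Nat.factorial (C - 3) * 2 := by
          exact Nat.mul_le_mul_right 2 h1
      _ ≤ (C - 2) * Nat.factorial (C - 3) := by
          rw [Nat.mul_comm]; exact Nat.mul_le_mul_right _ h3
      _ = Nat.factorial (C - 2) := h2.symm
  have hfR : (Nat.factorial (C - l - 1) : ℝ) / (Nat.factorial (C - 2) : ℝ) ≤ 1 / 2 := by
    rw [div_le_div_iff₀ (by positivity) (by norm_num)]
    have : (Nat.factorial (C - l - 1) : ℝ) * 2 ≤ (Nat.factorial (C - 2) : ℝ) := by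
      exact_mod_cast hfn
    linarith
  have hf0 : (0 : ℝ) < (Nat.factorial (C - l - 1) : ℝ) / (Nat.factorial (C - 2) : ℝ) := by
    positivity
  have hAB : Real.exp 1 / (Real.exp 1 - 1) * ((C : ℝ) ^ 2 / (M : ℝ) ^ 2) < 2 :=
    lt_of_le_of_lt (mul_le_of_le_one_right hA0.le hB) hA
  have := mul_le_mul_of_nonneg_left hfR (mul_pos hA0 hB0).le
  linarith
end
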